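/- For a diagram N ⊆ ℕ^n (N + ℕ^n = N) and α ∈ ℕ^n, define N(α) = ℕ^n + {β ∈ N : β ≤ α} and N^-(α) = ℕ^n + {β ∈ N : β < α}, with ≤ the graded lexicographic-type total order. For diagrams N₁, N₂ ordered by comparing their increasing sequences of vertices lexicographically, the following are equivalent: (1) N₁(α) < N₂(α); (2) there exists θ ≤ α with N₁^-(θ) = N₂^-(θ), θ ∈ N₁(θ), and θ ∉ N₂(θ). -/

import Mathlib

/-- The key `(|α|, α₁, …, α_n)` of a multi-index, compared lexicographically. -/
def dlKey {n : ℕ} (a : Fin n →₀ ℕ) : ℕ ×ₗ Lex (Fin n →₀ ℕ) :=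
  toLex ((∑ i, a i : ℕ), toLex a)

/-- Total-degree-then-lexicographic strict comparison `α < β` on multi-indices. -/
def degLexLt {n : ℕ} (a b : Fin n →₀ ℕ) : Prop := dlKey a < dlKey b

/-- Total-degree-then-lexicographic comparison `α ≤ β` on multi-indices. -/
def degLexLe {n : ℕ} (a b : Fin n →₀ ℕ) : Prop := dlKey a ≤ dlKey b

/-- The translated cone `a + ℕ^n`. -/
def cone {n : ℕ} (a : Fin n →₀ ℕ) : Set (Fin n →₀ ℕ) :=
  {x | ∃ c : Fin n →₀ ℕ, x = a + c}

/-- `N(α) = ℕ^n + {β ∈ N : β ≤ α}`. -/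
def diagAt {n : ℕ} (N : Set (Fin n →₀ ℕ)) (α : Fin n →₀ ℕ) : Set (Fin n →₀ ℕ) :=
  {x | ∃ b ∈ N, degLexLe b α ∧ ∃ c : Fin n →₀ ℕ, x = b + c}

/-- `N^-(α) = ℕ^n + {β ∈ N : β < α}`. -/
def diagBelow {n : ℕ} (N : Set (Fin n →₀ ℕ)) (α : Fin n →₀ ℕ) : Set (Fin n →₀ ℕ) :=
  {x | ∃ b ∈ N, degLexLt b α ∧ ∃ c : Fin n →₀ ℕ, x = b + c}

/-- `v` is a vertex of the diagram `D`: an element of `D` not of the form `b + c` for any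
other element `b` of `D` (i.e. a minimal generator). -/
def IsVertex {n : ℕ} (D : Set (Fin n →₀ ℕ)) (v : Fin n →₀ ℕ) : Prop :=
  v ∈ D ∧ ∀ b ∈ D, (∃ c : Fin n →₀ ℕ, v = b + c) → b = v

/-- The increasing vertex list of a diagram, padded by `+∞` to an infinite sequence of
keys. -/
def padVert {n s : ℕ} (w : Fin s → (Fin n →₀ ℕ)) : ℕ → WithTop (ℕ ×ₗ Lex (Fin n →₀ ℕ)) :=
  fun j => if h : j < s then (WithTop.some (dlKey (w ⟨j, h⟩))) else ⊤

/-- The lexicographic comparison of diagrams via their increasing sequences of vertices,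
with missing entries of the shorter list counted as `+∞`. -/
def DiagLexLt {n s₁ s₂ : ℕ} (w₁ : Fin s₁ → (Fin n →₀ ℕ)) (w₂ : Fin s₂ → (Fin n →₀ ℕ)) :
    Prop :=
  ∃ j : ℕ, (∀ i < j, padVert w₁ i = padVert w₂ i) ∧ padVert w₁ j < padVert w₂ j

section Aux

variable {n : ℕ}

lemma dlKey_injective {a b : Fin n →₀ ℕ} (h : dlKey a = dlKey b) : a = b := by
  unfold dlKey at h
  have h' := toLex_inj.mp h
  exact toLex_inj.mp (congrArg Prod.snd h')

lemma sum_pos' {c : Fin n →₀ ℕ} (hc : c ≠ 0) : 0 < ∑ i, c i := by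
  rcases Nat.eq_zero_or_pos (∑ i, c i) with h | h
  · exfalso; apply hc; ext i
    exact (Finset.sum_eq_zero_iff.mp h) i (Finset.mem_univ i)
  · exact h

lemma dlKey_lt_add (a : Fin n →₀ ℕ) {c : Fin n →₀ ℕ} (hc : c ≠ 0) :
    dlKey a < dlKey (a + c) := by
  unfold dlKey
  rw [Prod.Lex.lt_iff]
  left
  simp only [Finsupp.add_apply]
  rw [Finset.sum_add_distrib]
  have := sum_pos' hc
  simp only [ofLex_toLex]
  omega

lemma dlKey_le_add (a c : Fin n →₀ ℕ) : dlKey a ≤ dlKey (a + c) := by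
  by_cases hc : c = 0
  · subst hc; rw [add_zero]
  · exact le_of_lt (dlKey_lt_add a hc)

lemma mem_diagAt_of {N : Set (Fin n →₀ ℕ)} {b α : Fin n →₀ ℕ}
    (hb : b ∈ N) (hbα : degLexLe b α) : b ∈ diagAt N α :=
  ⟨b, hb, hbα, 0, (add_zero b).symm⟩

lemma diagAt_add_mem {N : Set (Fin n →₀ ℕ)} {x α : Fin n →₀ ℕ}
    (hx : x ∈ diagAt N α) (c : Fin n →₀ ℕ) : x + c ∈ diagAt N α := by
  obtain ⟨b, hb, hbα, c', rfl⟩ := hx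
  exact ⟨b, hb, hbα, c' + c, add_assoc b c' c⟩

lemma IsVertex.memN {N : Set (Fin n →₀ ℕ)} {α v : Fin n →₀ ℕ}
    (h : IsVertex (diagAt N α) v) : v ∈ N ∧ degLexLe v α := by
  obtain ⟨⟨b, hbN, hbα, c, hvc⟩, hmin⟩ := h
  have hb : b ∈ diagAt N α := mem_diagAt_of hbN hbα
  have hbv : b = v := hmin b hb ⟨c, hvc⟩
  subst hbv; exact ⟨hbN, hbα⟩

lemma exists_vertex_aux (N : Set (Fin n →₀ ℕ)) (α : Fin n →₀ ℕ) :
    ∀ m : ℕ, ∀ x ∈ diagAt N α, (∑ i, x i) < m →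
      ∃ v, IsVertex (diagAt N α) v ∧ ∃ c, x = v + c := by
  intro m
  induction m with
  | zero => intro x _ h; omega
  | succ m ih =>
    intro x hx hdeg
    by_cases hv : IsVertex (diagAt N α) x
    · exact ⟨x, hv, 0, (add_zero x).symm⟩
    · have hex : ∃ b ∈ diagAt N α, (∃ c, x = b + c) ∧ b ≠ x := by
        by_contra hb
        push_neg at hb
        exact hv ⟨hx, fun b hbD hc => hb b hbD hc⟩
      obtain ⟨b, hbD, ⟨c, hxc⟩, hbx⟩ := hex
      have hc : c ≠ 0 := by rintro rfl; exact hbx (by rw [hxc, add_zero])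
      have hdegb : (∑ i, b i) < m := by
        have h1 : (∑ i, x i) = (∑ i, b i) + (∑ i, c i) := by
          rw [hxc]; simp only [Finsupp.add_apply]; rw [Finset.sum_add_distrib]
        have h2 := sum_pos' hc
        omega
      obtain ⟨v, hvv, c', rfl⟩ := ih b hbD hdegb
      exact ⟨v, hvv, c' + c, by rw [hxc, add_assoc]⟩

lemma exists_vertex {N : Set (Fin n →₀ ℕ)} {α x : Fin n →₀ ℕ} (hx : x ∈ diagAt N α) :
    ∃ v, IsVertex (diagAt N α) v ∧ ∃ c, x = v + c :=
  exists_vertex_aux N α ((∑ i, x i) + 1) x hx (Nat.lt_succ_self _)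

lemma diagBelow_subset {N : Set (Fin n →₀ ℕ)} {θ α : Fin n →₀ ℕ}
    (hθ : degLexLe θ α) : diagBelow N θ ⊆ diagAt N α := by
  rintro x ⟨b, hb, hbθ, c, hxc⟩
  exact ⟨b, hb, le_of_lt (lt_of_lt_of_le hbθ hθ), c, hxc⟩

lemma mem_diagBelow_of {N : Set (Fin n →₀ ℕ)} {θ α β : Fin n →₀ ℕ}
    (hβ : degLexLt β θ) (h : β ∈ diagAt N α) : β ∈ diagBelow N θ := by
  obtain ⟨b, hbN, _, c, rfl⟩ := h
  exact ⟨b, hbN, lt_of_le_of_lt (dlKey_le_add b c) hβ, c, rfl⟩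

lemma mem_diagAt_of_le {N : Set (Fin n →₀ ℕ)} {θ α β : Fin n →₀ ℕ}
    (hβ : degLexLe β θ) (h : β ∈ diagAt N α) : β ∈ diagAt N θ := by
  obtain ⟨b, hbN, _, c, rfl⟩ := h
  exact ⟨b, hbN, le_trans (dlKey_le_add b c) hβ, c, rfl⟩

lemma vertex_transfer {N₁ N₂ : Set (Fin n →₀ ℕ)} {θ α v : Fin n →₀ ℕ}
    (hθ : degLexLe θ α) (hB : diagBelow N₁ θ = diagBelow N₂ θ)
    (hv : IsVertex (diagAt N₁ α) v) (hvθ : degLexLt v θ) :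
    IsVertex (diagAt N₂ α) v := by
  have hv2 : v ∈ diagAt N₂ α :=
    diagBelow_subset hθ (hB ▸ mem_diagBelow_of hvθ hv.1)
  refine ⟨hv2, ?_⟩
  rintro b hbD ⟨c, hvc⟩
  by_cases hc : c = 0
  · subst hc; rw [add_zero] at hvc; exact hvc.symm
  · have hbv : degLexLt b v := by
      have := dlKey_lt_add b hc
      rw [← hvc] at this
      exact this
    have hbθ : degLexLt b θ := lt_trans hbv hvθ
    have hb1 : b ∈ diagAt N₁ α :=
      diagBelow_subset hθ (hB.symm ▸ mem_diagBelow_of hbθ hbD)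
    exact hv.2 b hb1 ⟨c, hvc⟩

lemma padVert_eq_some {s : ℕ} (w : Fin s → (Fin n →₀ ℕ)) {i : ℕ} (h : i < s) :
    padVert w i = WithTop.some (dlKey (w ⟨i, h⟩)) := dif_pos h

lemma padVert_eq_top {s : ℕ} (w : Fin s → (Fin n →₀ ℕ)) {i : ℕ} (h : ¬ i < s) :
    padVert w i = ⊤ := dif_neg h

lemma padVert_lt {s : ℕ} {w : Fin s → (Fin n →₀ ℕ)}
    (hm : ∀ i j : Fin s, i < j → degLexLt (w i) (w j)) {i j : ℕ} (hij : i < j)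
    (hj : j < s) : padVert w i < padVert w j := by
  have hi : i < s := lt_trans hij hj
  rw [padVert_eq_some w hi, padVert_eq_some w hj]
  exact WithTop.coe_lt_coe.mpr (hm ⟨i, hi⟩ ⟨j, hj⟩ hij)

lemma padVert_mono {s : ℕ} {w : Fin s → (Fin n →₀ ℕ)}
    (hm : ∀ i j : Fin s, i < j → degLexLt (w i) (w j)) {i j : ℕ} (hij : i ≤ j) :
    padVert w i ≤ padVert w j := by
  rcases eq_or_lt_of_le hij with rfl | h
  · exact le_rfl
  · by_cases hj : j < s
    · exact le_of_lt (padVert_lt hm h hj)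
    · rw [padVert_eq_top w hj]; exact le_top

lemma lt_of_padVert_lt {s : ℕ} {w : Fin s → (Fin n →₀ ℕ)}
    (hm : ∀ i j : Fin s, i < j → degLexLt (w i) (w j)) {i j : ℕ}
    (h : padVert w i < padVert w j) : i < j := by
  by_contra h'
  push_neg at h'
  exact absurd h (not_lt.mpr (padVert_mono hm h'))

lemma sync_step {s₁ s₂ : ℕ} {w₁ : Fin s₁ → (Fin n →₀ ℕ)} {w₂ : Fin s₂ → (Fin n →₀ ℕ)}
    (h₁ : ∀ i j : Fin s₁, i < j → degLexLt (w₁ i) (w₁ j))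
    (h₂ : ∀ i j : Fin s₂, i < j → degLexLt (w₂ i) (w₂ j))
    {K : ℕ ×ₗ Lex (Fin n →₀ ℕ)}
    (t₁₂ : ∀ i : Fin s₁, dlKey (w₁ i) < K → ∃ i₂ : Fin s₂, w₂ i₂ = w₁ i)
    (t₂₁ : ∀ i : Fin s₂, dlKey (w₂ i) < K → ∃ i₁ : Fin s₁, w₁ i₁ = w₂ i)
    (i : ℕ)
    (IH : ∀ i' < i, (padVert w₁ i' < (K : WithTop _) ∨ padVert w₂ i' < (K : WithTop _)) →
      padVert w₁ i' = padVert w₂ i')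
    (hi : padVert w₁ i < (K : WithTop _)) : padVert w₁ i = padVert w₂ i := by
  have hs : i < s₁ := by
    by_contra h
    rw [padVert_eq_top w₁ h] at hi
    exact not_top_lt hi
  rw [padVert_eq_some w₁ hs] at hi ⊢
  set v := w₁ ⟨i, hs⟩ with hv
  have hvK : dlKey v < K := WithTop.coe_lt_coe.mp hi
  obtain ⟨i₂, hi₂⟩ := t₁₂ ⟨i, hs⟩ hvK
  have hk₂ : dlKey (w₂ i₂) = dlKey v := congrArg dlKey hi₂
  have hne1 : ¬ (i₂ : ℕ) < i := by
    intro h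
    have hp₂ : padVert w₂ (i₂ : ℕ) = WithTop.some (dlKey v) := by
      rw [padVert_eq_some w₂ i₂.2, Fin.eta, hk₂]
    have e := IH i₂ h (Or.inr (by rw [hp₂]; exact hi))
    rw [hp₂] at e
    have hs' : (i₂ : ℕ) < s₁ := by
      by_contra h'
      rw [padVert_eq_top w₁ h'] at e
      exact (WithTop.coe_ne_top e.symm)
    rw [padVert_eq_some w₁ hs'] at e
    have hlt' : dlKey (w₁ ⟨(i₂ : ℕ), hs'⟩) < dlKey v := h₁ ⟨i₂, hs'⟩ ⟨i, hs⟩ h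
    rw [WithTop.coe_inj.mp e] at hlt'
    exact lt_irrefl _ hlt'
  have hne2 : ¬ i < (i₂ : ℕ) := by
    intro h
    have hs₂ : i < s₂ := lt_trans h i₂.2
    set u := w₂ ⟨i, hs₂⟩ with hu
    have huv : dlKey u < dlKey v := by
      have := h₂ ⟨i, hs₂⟩ i₂ h
      rw [hi₂] at this
      exact this
    have huK : dlKey u < K := lt_trans huv hvK
    obtain ⟨i₁, hi₁⟩ := t₂₁ ⟨i, hs₂⟩ huK
    have hk₁ : dlKey (w₁ i₁) = dlKey u := congrArg dlKey hi₁
    rcases lt_trichotomy (i₁ : ℕ) i with h' | h' | h'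
    · have hp₁ : padVert w₁ (i₁ : ℕ) = WithTop.some (dlKey u) := by
        rw [padVert_eq_some w₁ i₁.2, Fin.eta, hk₁]
      have e := IH i₁ h' (Or.inl (by rw [hp₁]; exact WithTop.coe_lt_coe.mpr huK))
      rw [hp₁] at e
      have hs' : (i₁ : ℕ) < s₂ := lt_trans h' hs₂
      rw [padVert_eq_some w₂ hs'] at e
      have hlt' : dlKey (w₂ ⟨(i₁ : ℕ), hs'⟩) < dlKey u := h₂ ⟨i₁, hs'⟩ ⟨i, hs₂⟩ h'
      rw [← WithTop.coe_inj.mp e] at hlt'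
      exact lt_irrefl _ hlt'
    · have hfin : i₁ = (⟨i, hs⟩ : Fin s₁) := Fin.ext h'
      rw [hfin, ← hv] at hk₁
      rw [hk₁] at huv
      exact lt_irrefl _ huv
    · have hlt' : dlKey v < dlKey (w₁ i₁) := h₁ ⟨i, hs⟩ i₁ h'
      rw [hk₁] at hlt'
      exact lt_irrefl _ (lt_trans hlt' huv)
  have hii : (i₂ : ℕ) = i := by omega
  have hs₂ : i < s₂ := hii ▸ i₂.2
  rw [padVert_eq_some w₂ hs₂]
  congr 1
  rw [← hk₂]
  congr 1
  rw [← Fin.eta i₂ i₂.2]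
  congr 1
  exact Fin.ext hii

lemma sync {s₁ s₂ : ℕ} {w₁ : Fin s₁ → (Fin n →₀ ℕ)} {w₂ : Fin s₂ → (Fin n →₀ ℕ)}
    (h₁ : ∀ i j : Fin s₁, i < j → degLexLt (w₁ i) (w₁ j))
    (h₂ : ∀ i j : Fin s₂, i < j → degLexLt (w₂ i) (w₂ j))
    {K : ℕ ×ₗ Lex (Fin n →₀ ℕ)}
    (t₁₂ : ∀ i : Fin s₁, dlKey (w₁ i) < K → ∃ i₂ : Fin s₂, w₂ i₂ = w₁ i)
    (t₂₁ : ∀ i : Fin s₂, dlKey (w₂ i) < K → ∃ i₁ : Fin s₁, w₁ i₁ = w₂ i) :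
    ∀ i : ℕ, (padVert w₁ i < (K : WithTop _) ∨ padVert w₂ i < (K : WithTop _)) →
      padVert w₁ i = padVert w₂ i := by
  intro i
  induction i using Nat.strong_induction_on with
  | _ i IH =>
    intro hcase
    rcases hcase with h | h
    · exact sync_step h₁ h₂ t₁₂ t₂₁ i IH h
    · exact (sync_step h₂ h₁ t₂₁ t₁₂ i
        (fun i' hi' hc => (IH i' hi' hc.symm).symm) h).symm

end Aux

/-- For diagrams `N ⊆ ℕ^n` (`N + ℕ^n = N`) and `α ∈ ℕ^n`, set
`N(α) = ℕ^n + {β ∈ N : β ≤ α}` and `N^-(α) = ℕ^n + {β ∈ N : β < α}`, with `≤` the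
graded lexicographic-type total order.  Diagrams are compared by the lexicographic order
on their increasing vertex sequences (shorter sequences padded by `+∞`).  Given
increasing enumerations `w₁`, `w₂` of the vertices of `N₁(α)`, `N₂(α)`, the following
are equivalent: (1) `N₁(α) < N₂(α)`; (2) there exists `θ ≤ α` with
`N₁^-(θ) = N₂^-(θ)`, `θ ∈ N₁(θ)` and `θ ∉ N₂(θ)`. -/
theorem statement14 {n : ℕ} (N₁ N₂ : Set (Fin n →₀ ℕ))
    (hN₁ : {x | ∃ a ∈ N₁, ∃ c : Fin n →₀ ℕ, x = a + c} = N₁)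
    (hN₂ : {x | ∃ a ∈ N₂, ∃ c : Fin n →₀ ℕ, x = a + c} = N₂)
    (α : Fin n →₀ ℕ) {s₁ s₂ : ℕ}
    (w₁ : Fin s₁ → (Fin n →₀ ℕ)) (w₂ : Fin s₂ → (Fin n →₀ ℕ))
    (hw₁mono : ∀ i j : Fin s₁, i < j → degLexLt (w₁ i) (w₁ j))
    (hw₂mono : ∀ i j : Fin s₂, i < j → degLexLt (w₂ i) (w₂ j))
    (hw₁ : ∀ v, IsVertex (diagAt N₁ α) v ↔ ∃ i, w₁ i = v)
    (hw₂ : ∀ v, IsVertex (diagAt N₂ α) v ↔ ∃ i, w₂ i = v) :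
    DiagLexLt w₁ w₂ ↔
      ∃ θ : Fin n →₀ ℕ, degLexLe θ α ∧ diagBelow N₁ θ = diagBelow N₂ θ ∧
        θ ∈ diagAt N₁ θ ∧ θ ∉ diagAt N₂ θ := by
  constructor
  · rintro ⟨j, heq, hlt⟩
    have hj₁ : j < s₁ := by
      by_contra h
      rw [padVert_eq_top w₁ h] at hlt
      exact not_top_lt hlt
    set θ := w₁ ⟨j, hj₁⟩ with hθdef
    have hθv : IsVertex (diagAt N₁ α) θ := (hw₁ θ).mpr ⟨⟨j, hj₁⟩, rfl⟩
    obtain ⟨hθN, hθα⟩ := hθv.memN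
    have hpj : padVert w₁ j = WithTop.some (dlKey θ) := padVert_eq_some w₁ hj₁
    refine ⟨θ, hθα, ?_, mem_diagAt_of hθN (le_refl (dlKey θ)), ?_⟩
    · -- diagBelow N₁ θ = diagBelow N₂ θ
      ext x
      constructor
      · rintro ⟨b, hbN, hbθ, c, rfl⟩
        have hbD : b ∈ diagAt N₁ α := mem_diagAt_of hbN (le_trans (le_of_lt hbθ) hθα)
        obtain ⟨v, hvv, c', rfl⟩ := exists_vertex hbD
        obtain ⟨i₁, hi₁⟩ := (hw₁ v).mp hvv
        have hvθ : dlKey v < dlKey θ := lt_of_le_of_lt (dlKey_le_add v c') hbθ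
        have hp₁ : padVert w₁ (i₁ : ℕ) = WithTop.some (dlKey v) := by
          rw [padVert_eq_some w₁ i₁.2, Fin.eta, hi₁]
        have hlt₁ : (i₁ : ℕ) < j := by
          apply lt_of_padVert_lt hw₁mono
          rw [hp₁, hpj]
          exact WithTop.coe_lt_coe.mpr hvθ
        have e := heq i₁ hlt₁
        rw [hp₁] at e
        have hs' : (i₁ : ℕ) < s₂ := by
          by_contra h'
          rw [padVert_eq_top w₂ h'] at e
          exact WithTop.coe_ne_top e
        rw [padVert_eq_some w₂ hs'] at e
        have hveq : w₂ ⟨i₁, hs'⟩ = v := dlKey_injective (WithTop.coe_inj.mp e).symm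
        have hv2 : IsVertex (diagAt N₂ α) v := (hw₂ v).mpr ⟨⟨i₁, hs'⟩, hveq⟩
        exact ⟨v, hv2.memN.1, hvθ, c' + c, by rw [add_assoc]⟩
      · rintro ⟨b, hbN, hbθ, c, rfl⟩
        have hbD : b ∈ diagAt N₂ α := mem_diagAt_of hbN (le_trans (le_of_lt hbθ) hθα)
        obtain ⟨v, hvv, c', rfl⟩ := exists_vertex hbD
        obtain ⟨i₂, hi₂⟩ := (hw₂ v).mp hvv
        have hvθ : dlKey v < dlKey θ := lt_of_le_of_lt (dlKey_le_add v c') hbθ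
        have hp₂ : padVert w₂ (i₂ : ℕ) = WithTop.some (dlKey v) := by
          rw [padVert_eq_some w₂ i₂.2, Fin.eta, hi₂]
        have hlt₂ : (i₂ : ℕ) < j := by
          apply lt_of_padVert_lt hw₂mono
          rw [hp₂]
          exact lt_trans (lt_of_lt_of_le (WithTop.coe_lt_coe.mpr hvθ) (le_of_eq hpj.symm)) hlt
        have e := heq i₂ hlt₂
        rw [hp₂] at e
        have hs' : (i₂ : ℕ) < s₁ := by
          by_contra h'
          rw [padVert_eq_top w₁ h'] at e
          exact WithTop.coe_ne_top e.symm
        rw [padVert_eq_some w₁ hs'] at e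
        have hveq : w₁ ⟨i₂, hs'⟩ = v := dlKey_injective (WithTop.coe_inj.mp e)
        have hv1 : IsVertex (diagAt N₁ α) v := (hw₁ v).mpr ⟨⟨i₂, hs'⟩, hveq⟩
        exact ⟨v, hv1.memN.1, hvθ, c' + c, by rw [add_assoc]⟩
    · -- θ ∉ diagAt N₂ θ
      rintro ⟨b, hbN, hbθ, c, hθbc⟩
      have hbD : b ∈ diagAt N₂ α := mem_diagAt_of hbN (le_trans hbθ hθα)
      obtain ⟨v, hvv, c', hbvc⟩ := exists_vertex hbD
      obtain ⟨i₂, hi₂⟩ := (hw₂ v).mp hvv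
      have hvθle : dlKey v ≤ dlKey θ := le_trans (hbvc ▸ dlKey_le_add v c') hbθ
      have hp₂ : padVert w₂ (i₂ : ℕ) = WithTop.some (dlKey v) := by
        rw [padVert_eq_some w₂ i₂.2, Fin.eta, hi₂]
      have hlt₂ : (i₂ : ℕ) < j := by
        apply lt_of_padVert_lt hw₂mono
        rw [hp₂]
        calc (WithTop.some (dlKey v) : WithTop _) ≤ WithTop.some (dlKey θ) :=
              WithTop.coe_le_coe.mpr hvθle
          _ = padVert w₁ j := hpj.symm
          _ < padVert w₂ j := hlt
      have e := heq i₂ hlt₂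
      rw [hp₂] at e
      have hs' : (i₂ : ℕ) < s₁ := by
        by_contra h'
        rw [padVert_eq_top w₁ h'] at e
        exact WithTop.coe_ne_top e.symm
      rw [padVert_eq_some w₁ hs'] at e
      have hveq : w₁ ⟨i₂, hs'⟩ = v := dlKey_injective (WithTop.coe_inj.mp e)
      have hv1 : v ∈ diagAt N₁ α := ((hw₁ v).mpr ⟨⟨i₂, hs'⟩, hveq⟩).1
      have hvθ2 : v = θ := hθv.2 v hv1 ⟨c' + c, by rw [hθbc, hbvc, add_assoc]⟩
      have : dlKey (w₁ ⟨i₂, hs'⟩) < dlKey (w₁ ⟨j, hj₁⟩) := hw₁mono _ _ hlt₂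
      rw [hveq, hvθ2] at this
      exact lt_irrefl _ this
  · rintro ⟨θ, hθα, hB, hθ1, hθ2⟩
    have hθD₁ : θ ∈ diagAt N₁ α := by
      obtain ⟨b, hb, hbθ, c, e⟩ := hθ1
      exact ⟨b, hb, le_trans hbθ hθα, c, e⟩
    have hθD₂ : θ ∉ diagAt N₂ α := fun h => hθ2 (mem_diagAt_of_le (le_refl (dlKey θ)) h)
    have t₁₂ : ∀ i : Fin s₁, dlKey (w₁ i) < dlKey θ → ∃ i₂ : Fin s₂, w₂ i₂ = w₁ i :=
      fun i h => (hw₂ _).mp (vertex_transfer hθα hB ((hw₁ _).mpr ⟨i, rfl⟩) h)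
    have t₂₁ : ∀ i : Fin s₂, dlKey (w₂ i) < dlKey θ → ∃ i₁ : Fin s₁, w₁ i₁ = w₂ i :=
      fun i h => (hw₁ _).mp (vertex_transfer hθα hB.symm ((hw₂ _).mpr ⟨i, rfl⟩) h)
    have hsync := sync hw₁mono hw₂mono t₁₂ t₂₁
    obtain ⟨v, hvv, c, hθvc⟩ := exists_vertex hθD₁
    obtain ⟨jF, hjv⟩ := (hw₁ v).mp hvv
    have hvθle : dlKey v ≤ dlKey θ := hθvc ▸ dlKey_le_add v c
    have hvθ : v = θ := by
      rcases lt_or_eq_of_le hvθle with h | h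
      · exfalso
        have hv2 : v ∈ diagAt N₂ α := (vertex_transfer hθα hB hvv h).1
        exact hθD₂ (hθvc ▸ diagAt_add_mem hv2 c)
      · exact dlKey_injective h
    subst hvθ
    refine ⟨(jF : ℕ), ?_, ?_⟩
    · intro i hij
      apply hsync
      left
      have hi : i < s₁ := lt_trans hij jF.2
      rw [padVert_eq_some w₁ hi]
      apply WithTop.coe_lt_coe.mpr
      have := hw₁mono ⟨i, hi⟩ jF hij
      rw [hjv] at this
      exact this
    · have hpj : padVert w₁ (jF : ℕ) = WithTop.some (dlKey v) := by
        rw [padVert_eq_some w₁ jF.2, Fin.eta, hjv]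
      rw [hpj]
      by_cases hs2 : (jF : ℕ) < s₂
      · rw [padVert_eq_some w₂ hs2]
        set u := w₂ ⟨jF, hs2⟩ with hu
        rcases lt_trichotomy (dlKey u) (dlKey v) with h | h | h
        · exfalso
          have e := hsync (jF : ℕ) (Or.inr (by
            rw [padVert_eq_some w₂ hs2]
            exact WithTop.coe_lt_coe.mpr h))
          rw [hpj, padVert_eq_some w₂ hs2] at e
          have := WithTop.coe_inj.mp e
          rw [this] at h
          exact lt_irrefl _ h
        · exfalso
          have huv : u = v := dlKey_injective h
          have hu2 : u ∈ diagAt N₂ α := ((hw₂ u).mpr ⟨⟨jF, hs2⟩, rfl⟩).1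
          rw [huv] at hu2
          exact hθD₂ hu2
        · exact WithTop.coe_lt_coe.mpr h
      · rw [padVert_eq_top w₂ hs2]
        exact WithTop.coe_lt_top _
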